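/- For d = 2: any two cycle-free 2-partitions of K_4 are involution equivalent; moreover the set of cycle-free 2-partitions of K_4 has exactly 12 elements. -/

import Mathlib

open SimpleGraph

/-- A cycle-free `d`-partition of the complete graph on `Fin n`: each unordered pair of
distinct vertices is an edge of exactly one component, and every component is acyclic. -/
def IsCFP {n d : ℕ} (Γ : Fin d → SimpleGraph (Fin n)) : Prop :=
  (∀ u v : Fin n, u ≠ v → ∃! i, (Γ i).Adj u v) ∧ ∀ i, (Γ i).IsAcyclic

/-- `(u,v)` is the same unordered pair as `(a,b)`. -/
def SamePair {n : ℕ} (u v a b : Fin n) : Prop := (u = a ∧ v = b) ∨ (u = b ∧ v = a)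

/-- The partitions `P` and `Q` differ on the edge `(u,v)`. -/
def Differs {n d : ℕ} (P Q : Fin d → SimpleGraph (Fin n)) (u v : Fin n) : Prop :=
  ∃ i, ¬ ((Q i).Adj u v ↔ (P i).Adj u v)

/-- `Q` agrees with `P` on every edge except the edges `(x,y)`, `(x,z)`, `(y,z)`,
and differs from `P` on at least two of those three edges. -/
def FlipCond {n d : ℕ} (x y z : Fin n) (P Q : Fin d → SimpleGraph (Fin n)) : Prop :=
  (∀ u v : Fin n, ¬ SamePair u v x y → ¬ SamePair u v x z → ¬ SamePair u v y z →
      ∀ i, ((Q i).Adj u v ↔ (P i).Adj u v)) ∧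
  ((Differs P Q x y ∧ Differs P Q x z) ∨ (Differs P Q x y ∧ Differs P Q y z) ∨
    (Differs P Q x z ∧ Differs P Q y z))

/-- One involution move between cycle-free partitions. -/
def Step {n d : ℕ} (P Q : Fin d → SimpleGraph (Fin n)) : Prop :=
  IsCFP P ∧ IsCFP Q ∧ ∃ x y z : Fin n, x ≠ y ∧ x ≠ z ∧ y ≠ z ∧ FlipCond x y z P Q

/-- Involution equivalence: a finite sequence of involution moves. -/
def InvEquiv {n d : ℕ} : (Fin d → SimpleGraph (Fin n)) → (Fin d → SimpleGraph (Fin n)) → Prop :=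
  Relation.ReflTransGen Step

/-- The graph `Ω_t^{(d)}` on vertices `{1,…,2d}` (vertex `v : Fin (2d)` has label `v+1`):
the edge `(i,j)`, `i<j`, belongs to `Ω_t` iff `i+j` is even and `i ∈ {2t-1,2t}`,
or `i+j` is odd and `j ∈ {2t-1,2t}`. -/
def Omega (d t : ℕ) : SimpleGraph (Fin (2*d)) :=
  SimpleGraph.fromRel (fun u v =>
    u.1 < v.1 ∧
    (((u.1 + v.1) % 2 = 0 ∧ (u.1 + 1 = 2*t - 1 ∨ u.1 + 1 = 2*t)) ∨
     ((u.1 + v.1) % 2 = 1 ∧ (v.1 + 1 = 2*t - 1 ∨ v.1 + 1 = 2*t))))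

/-- The standard twin-star cycle-free `d`-partition `E_d = (Ω₁,…,Ω_d)`. -/
def Ed (d : ℕ) : Fin d → SimpleGraph (Fin (2*d)) := fun t => Omega d (t.1 + 1)

/-- The twin-star graph `TS_d` with `2d` vertices: centers `0` and `1` are adjacent,
center `0` is adjacent to the `d-1` leaves `2,…,d`, and center `1` to the leaves
`d+1,…,2d-1`. -/
def TwinStar (d : ℕ) : SimpleGraph (Fin (2*d)) :=
  SimpleGraph.fromRel (fun u v =>
    (u.1 = 0 ∧ 1 ≤ v.1 ∧ v.1 ≤ d) ∨ (u.1 = 1 ∧ d + 1 ≤ v.1))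

/-- The action of `(σ, τ) ∈ S_{2d} × S_d` on a `d`-partition: `σ` relabels vertices and
`τ` permutes the order of the components. -/
def actP {n d : ℕ} (σ : Equiv.Perm (Fin n)) (τ : Equiv.Perm (Fin d))
    (P : Fin d → SimpleGraph (Fin n)) : Fin d → SimpleGraph (Fin n) :=
  fun i => (P (τ⁻¹ i)).map σ.toEmbedding

/-- One step of weak equivalence: `P = (σ,τ) · (an involution move applied to Q)`. -/
def WStep {n d : ℕ} (P Q : Fin d → SimpleGraph (Fin n)) : Prop :=
  ∃ (σ : Equiv.Perm (Fin n)) (τ : Equiv.Perm (Fin d)) (R : Fin d → SimpleGraph (Fin n)),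
    Step Q R ∧ P = actP σ τ R

/-- Weak equivalence of cycle-free `d`-partitions. -/
def WeakEquiv {n d : ℕ} : (Fin d → SimpleGraph (Fin n)) → (Fin d → SimpleGraph (Fin n)) → Prop :=
  Relation.ReflTransGen WStep


instance {n : ℕ} (u v a b : Fin n) : Decidable (SamePair u v a b) := by
  unfold SamePair; infer_instance

lemma SamePair.symm' {n : ℕ} {u v a b : Fin n} (h : SamePair u v a b) : SamePair v u a b := by
  unfold SamePair at *; tauto

def GbAdj (b : Fin 6 → Bool) (u v : Fin 4) : Prop :=
  (SamePair u v 0 1 ∧ b 0) ∨ (SamePair u v 0 2 ∧ b 1) ∨ (SamePair u v 0 3 ∧ b 2) ∨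
    (SamePair u v 1 2 ∧ b 3) ∨ (SamePair u v 1 3 ∧ b 4) ∨ (SamePair u v 2 3 ∧ b 5)

instance (b : Fin 6 → Bool) (u v : Fin 4) : Decidable (GbAdj b u v) := by
  unfold GbAdj; infer_instance

lemma GbAdj_ne {b : Fin 6 → Bool} {u v : Fin 4} (h : GbAdj b u v) : u ≠ v := by
  rcases h with ⟨h,_⟩|⟨h,_⟩|⟨h,_⟩|⟨h,_⟩|⟨h,_⟩|⟨h,_⟩ <;>
    rcases h with ⟨rfl,rfl⟩|⟨rfl,rfl⟩ <;> decide

def Gb (b : Fin 6 → Bool) : SimpleGraph (Fin 4) where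
  Adj u v := GbAdj b u v
  symm := by
    constructor
    intro u v h
    unfold GbAdj at *
    rcases h with ⟨h,hb⟩|⟨h,hb⟩|⟨h,hb⟩|⟨h,hb⟩|⟨h,hb⟩|⟨h,hb⟩
    exacts [Or.inl ⟨h.symm', hb⟩, Or.inr (Or.inl ⟨h.symm', hb⟩),
      Or.inr (Or.inr (Or.inl ⟨h.symm', hb⟩)),
      Or.inr (Or.inr (Or.inr (Or.inl ⟨h.symm', hb⟩))),
      Or.inr (Or.inr (Or.inr (Or.inr (Or.inl ⟨h.symm', hb⟩)))),
      Or.inr (Or.inr (Or.inr (Or.inr (Or.inr ⟨h.symm', hb⟩))))]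
  loopless := ⟨fun v h => (GbAdj_ne h) rfl⟩

instance (b : Fin 6 → Bool) : DecidableRel (Gb b).Adj :=
  fun u v => inferInstanceAs (Decidable (GbAdj b u v))

def delE (G : SimpleGraph (Fin 4)) (v w : Fin 4) : SimpleGraph (Fin 4) where
  Adj a c := G.Adj a c ∧ ¬ SamePair a c v w
  symm := ⟨fun a c ⟨h1,h2⟩ => ⟨h1.symm, fun hs => h2 hs.symm'⟩⟩
  loopless := ⟨fun a h => G.irrefl h.1⟩

instance (G : SimpleGraph (Fin 4)) [DecidableRel G.Adj] (v w : Fin 4) :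
    DecidableRel (delE G v w).Adj := fun a c => by
  have : Decidable (G.Adj a c ∧ ¬ SamePair a c v w) := inferInstance
  exact this

lemma delE_eq (G : SimpleGraph (Fin 4)) (v w : Fin 4) :
    delE G v w = G \ fromEdgeSet {s(v,w)} := by
  ext a c
  simp only [delE, sdiff_adj, fromEdgeSet_adj, Set.mem_singleton_iff, Sym2.eq_iff, SamePair]
  constructor
  · rintro ⟨h1, h2⟩; exact ⟨h1, fun hc => h2 hc.1⟩
  · rintro ⟨h1, h2⟩; exact ⟨h1, fun hc => h2 ⟨hc, h1.ne⟩⟩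

instance (G : SimpleGraph (Fin 4)) [DecidableRel G.Adj] : Decidable G.IsAcyclic :=
  decidable_of_iff (∀ v w, G.Adj v w → G.Adj v w ∧ ¬ (delE G v w).Reachable v w) (by
    rw [isAcyclic_iff_forall_adj_isBridge]
    simp only [isBridge_iff, deleteEdges, ← delE_eq, imp_and, imp_self, true_and])

example : (Gb ![true,true,false,false,false,true]).IsAcyclic := by decide
example : ¬ (Gb ![true,true,false,true,false,false]).IsAcyclic := by decide

abbrev Pb (b : Fin 6 → Bool) : Fin 2 → SimpleGraph (Fin 4) :=
  fun i => Gb (if i = 0 then b else fun e => !b e)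

lemma adj_compl : ∀ (b : Fin 6 → Bool) (u v : Fin 4), u ≠ v →
    (GbAdj (fun e => !b e) u v ↔ ¬ GbAdj b u v) := by decide

lemma cfp_Pb_iff (b : Fin 6 → Bool) :
    IsCFP (Pb b) ↔ ((Gb b).IsAcyclic ∧ (Gb (fun e => !b e)).IsAcyclic) := by
  constructor
  · intro h; exact ⟨h.2 0, h.2 1⟩
  · intro h
    refine ⟨?_, ?_⟩
    · intro u v huv
      by_cases hc : GbAdj b u v
      · refine ⟨0, hc, ?_⟩
        intro j hj
        fin_cases j
        · rfl
        · exact absurd hc ((adj_compl b u v huv).1 hj)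
      · refine ⟨1, ?_, ?_⟩
        · exact (adj_compl b u v huv).2 hc
        · intro j hj
          fin_cases j
          · exact absurd hj hc
          · rfl
    · intro i
      fin_cases i
      · exact h.1
      · exact h.2

lemma adj01 {P : Fin 2 → SimpleGraph (Fin 4)} (h : IsCFP P) (u v : Fin 4) (huv : u ≠ v) :
    (P 1).Adj u v ↔ ¬ (P 0).Adj u v := by
  obtain ⟨i, hi, hu⟩ := h.1 u v huv
  fin_cases i
  · constructor
    · intro h1; exact absurd (hu 1 h1) (by decide)
    · intro hn; exact absurd hi hn
  · constructor
    · intro _ h0; exact absurd (hu 0 h0) (by decide)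
    · intro _; exact hi

lemma pair_cases : ∀ u v : Fin 4, u ≠ v → SamePair u v 0 1 ∨ SamePair u v 0 2 ∨
    SamePair u v 0 3 ∨ SamePair u v 1 2 ∨ SamePair u v 1 3 ∨ SamePair u v 2 3 := by decide

lemma sp_adj {G : SimpleGraph (Fin 4)} {u v a b : Fin 4} (hs : SamePair u v a b) :
    G.Adj u v ↔ G.Adj a b := by
  rcases hs with ⟨rfl,rfl⟩|⟨rfl,rfl⟩
  · exact Iff.rfl
  · exact G.adj_comm _ _

lemma repr_lemma {P : Fin 2 → SimpleGraph (Fin 4)} (h : IsCFP P) : ∃ b, P = Pb b := by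
  classical
  refine ⟨fun e => match e with
    | 0 => decide ((P 0).Adj 0 1) | 1 => decide ((P 0).Adj 0 2) | 2 => decide ((P 0).Adj 0 3)
    | 3 => decide ((P 0).Adj 1 2) | 4 => decide ((P 0).Adj 1 3) | 5 => decide ((P 0).Adj 2 3), ?_⟩
  set b : Fin 6 → Bool := fun e => match e with
    | 0 => decide ((P 0).Adj 0 1) | 1 => decide ((P 0).Adj 0 2) | 2 => decide ((P 0).Adj 0 3)
    | 3 => decide ((P 0).Adj 1 2) | 4 => decide ((P 0).Adj 1 3) | 5 => decide ((P 0).Adj 2 3)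
    with hb
  have h0 : P 0 = Gb b := by
    ext u v
    show (P 0).Adj u v ↔ GbAdj b u v
    by_cases huv : u = v
    · subst huv
      exact iff_of_false (fun hx => (P 0).irrefl hx) (fun hx => GbAdj_ne hx rfl)
    constructor
    · intro ha
      rcases pair_cases u v huv with hs|hs|hs|hs|hs|hs
      · exact Or.inl ⟨hs, decide_eq_true ((sp_adj hs).1 ha)⟩
      · exact Or.inr (Or.inl ⟨hs, decide_eq_true ((sp_adj hs).1 ha)⟩)
      · exact Or.inr (Or.inr (Or.inl ⟨hs, decide_eq_true ((sp_adj hs).1 ha)⟩))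
      · exact Or.inr (Or.inr (Or.inr (Or.inl ⟨hs, decide_eq_true ((sp_adj hs).1 ha)⟩)))
      · exact Or.inr (Or.inr (Or.inr (Or.inr (Or.inl ⟨hs, decide_eq_true ((sp_adj hs).1 ha)⟩))))
      · exact Or.inr (Or.inr (Or.inr (Or.inr (Or.inr ⟨hs, decide_eq_true ((sp_adj hs).1 ha)⟩))))
    · rintro (⟨hs,hd⟩|⟨hs,hd⟩|⟨hs,hd⟩|⟨hs,hd⟩|⟨hs,hd⟩|⟨hs,hd⟩) <;>
        exact (sp_adj hs).2 (of_decide_eq_true hd)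
  funext i
  fin_cases i
  · exact h0
  · show P 1 = Gb (fun e => ! b e)
    ext u v
    show (P 1).Adj u v ↔ GbAdj (fun e => ! b e) u v
    by_cases huv : u = v
    · subst huv
      exact iff_of_false (fun hx => (P 1).irrefl hx) (fun hx => GbAdj_ne hx rfl)
    · have h0' : (P 0).Adj u v = GbAdj b u v := congrArg (fun G => G.Adj u v) h0
      rw [adj01 h u v huv, h0']
      exact (adj_compl b u v huv).symm

def L : List (Fin 6 → Bool) :=
  [![false,false,true,true,false,true],
   ![false,false,true,true,true,false],
   ![false,true,false,false,true,true],
   ![false,true,false,true,true,false],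
   ![false,true,true,false,true,false],
   ![false,true,true,true,false,false],
   ![true,false,false,false,true,true],
   ![true,false,false,true,false,true],
   ![true,false,true,false,false,true],
   ![true,false,true,true,false,false],
   ![true,true,false,false,false,true],
   ![true,true,false,false,true,false]]

set_option maxHeartbeats 4000000 in
set_option maxRecDepth 100000 in
lemma acyclic_iff_memL : ∀ b : Fin 6 → Bool,
    ((Gb b).IsAcyclic ∧ (Gb (fun e => !b e)).IsAcyclic) ↔ b ∈ L := by decide

lemma cfp_of_mem {b : Fin 6 → Bool} (hb : b ∈ L) : IsCFP (Pb b) :=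
  (cfp_Pb_iff b).2 ((acyclic_iff_memL b).2 hb)

instance {n d : ℕ} (x y z : Fin n) (P Q : Fin d → SimpleGraph (Fin n))
    [∀ i, DecidableRel (P i).Adj] [∀ i, DecidableRel (Q i).Adj] :
    Decidable (FlipCond x y z P Q) := by
  unfold FlipCond Differs; infer_instance

instance (b : Fin 6 → Bool) : ∀ i, DecidableRel (Pb b i).Adj := fun i u v =>
  inferInstanceAs (Decidable (GbAdj (if i = 0 then b else fun e => !b e) u v))

lemma mkStep {b b' : Fin 6 → Bool} (hb : b ∈ L) (hb' : b' ∈ L) (x y z : Fin 4)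
    (h1 : x ≠ y) (h2 : x ≠ z) (h3 : y ≠ z) (hf : FlipCond x y z (Pb b) (Pb b')) :
    Step (Pb b) (Pb b') :=
  ⟨cfp_of_mem hb, cfp_of_mem hb', x, y, z, h1, h2, h3, hf⟩

lemma step_symm {n d : ℕ} {P Q : Fin d → SimpleGraph (Fin n)} (h : Step P Q) : Step Q P := by
  obtain ⟨h1, h2, x, y, z, hxy, hxz, hyz, hf⟩ := h
  refine ⟨h2, h1, x, y, z, hxy, hxz, hyz, ?_, ?_⟩
  · intro u v a b c i
    exact (hf.1 u v a b c i).symm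
  · have d1 : ∀ u v : Fin n, Differs P Q u v → Differs Q P u v := by
      rintro u v ⟨i, hi⟩
      exact ⟨i, fun hx => hi hx.symm⟩
    rcases hf.2 with ⟨ha, hb⟩ | ⟨ha, hb⟩ | ⟨ha, hb⟩
    · exact Or.inl ⟨d1 _ _ ha, d1 _ _ hb⟩
    · exact Or.inr (Or.inl ⟨d1 _ _ ha, d1 _ _ hb⟩)
    · exact Or.inr (Or.inr ⟨d1 _ _ ha, d1 _ _ hb⟩)

lemma invEquiv_symm {n d : ℕ} {P Q : Fin d → SimpleGraph (Fin n)} (h : InvEquiv P Q) :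
    InvEquiv Q P :=
  (@Relation.ReflTransGen.symmetric _ _ ⟨fun _ _ hs => step_symm hs⟩).symm _ _ h

lemma step_1 : Step (Pb ![false,false,true,true,false,true]) (Pb ![false,false,true,true,true,false]) :=
  mkStep (by decide) (by decide) 1 2 3 (by decide) (by decide) (by decide) (by decide)

lemma step_2 : Step (Pb ![true,false,false,false,true,true]) (Pb ![false,true,false,false,true,true]) :=
  mkStep (by decide) (by decide) 0 1 2 (by decide) (by decide) (by decide) (by decide)

lemma step_3 : Step (Pb ![false,true,true,true,false,false]) (Pb ![false,true,false,true,true,false]) :=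
  mkStep (by decide) (by decide) 0 1 3 (by decide) (by decide) (by decide) (by decide)

lemma step_4 : Step (Pb ![false,true,true,true,false,false]) (Pb ![false,true,true,false,true,false]) :=
  mkStep (by decide) (by decide) 1 2 3 (by decide) (by decide) (by decide) (by decide)

lemma step_5 : Step (Pb ![false,false,true,true,false,true]) (Pb ![false,true,true,true,false,false]) :=
  mkStep (by decide) (by decide) 0 2 3 (by decide) (by decide) (by decide) (by decide)

lemma step_6 : Step (Pb ![true,false,true,false,false,true]) (Pb ![true,false,false,false,true,true]) :=
  mkStep (by decide) (by decide) 0 1 3 (by decide) (by decide) (by decide) (by decide)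

lemma step_7 : Step (Pb ![false,false,true,true,false,true]) (Pb ![true,false,false,true,false,true]) :=
  mkStep (by decide) (by decide) 0 1 3 (by decide) (by decide) (by decide) (by decide)

lemma step_8 : Step (Pb ![false,false,true,true,false,true]) (Pb ![true,false,true,false,false,true]) :=
  mkStep (by decide) (by decide) 0 1 2 (by decide) (by decide) (by decide) (by decide)

lemma step_9 : Step (Pb ![true,false,true,false,false,true]) (Pb ![true,false,true,true,false,false]) :=
  mkStep (by decide) (by decide) 1 2 3 (by decide) (by decide) (by decide) (by decide)

lemma step_10 : Step (Pb ![true,false,true,false,false,true]) (Pb ![true,true,false,false,false,true]) :=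
  mkStep (by decide) (by decide) 0 2 3 (by decide) (by decide) (by decide) (by decide)

lemma step_11 : Step (Pb ![true,false,false,false,true,true]) (Pb ![true,true,false,false,true,false]) :=
  mkStep (by decide) (by decide) 0 2 3 (by decide) (by decide) (by decide) (by decide)
lemma eqv_0 : InvEquiv (Pb ![false,false,true,true,false,true]) (Pb ![false,false,true,true,false,true]) := Relation.ReflTransGen.refl

lemma eqv_1 : InvEquiv (Pb ![false,false,true,true,true,false]) (Pb ![false,false,true,true,false,true]) :=
  Relation.ReflTransGen.head (step_symm step_1) eqv_0

lemma eqv_5 : InvEquiv (Pb ![false,true,true,true,false,false]) (Pb ![false,false,true,true,false,true]) :=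
  Relation.ReflTransGen.head (step_symm step_5) eqv_0

lemma eqv_3 : InvEquiv (Pb ![false,true,false,true,true,false]) (Pb ![false,false,true,true,false,true]) :=
  Relation.ReflTransGen.head (step_symm step_3) eqv_5

lemma eqv_4 : InvEquiv (Pb ![false,true,true,false,true,false]) (Pb ![false,false,true,true,false,true]) :=
  Relation.ReflTransGen.head (step_symm step_4) eqv_5

lemma eqv_7 : InvEquiv (Pb ![true,false,false,true,false,true]) (Pb ![false,false,true,true,false,true]) :=
  Relation.ReflTransGen.head (step_symm step_7) eqv_0

lemma eqv_8 : InvEquiv (Pb ![true,false,true,false,false,true]) (Pb ![false,false,true,true,false,true]) :=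
  Relation.ReflTransGen.head (step_symm step_8) eqv_0

lemma eqv_6 : InvEquiv (Pb ![true,false,false,false,true,true]) (Pb ![false,false,true,true,false,true]) :=
  Relation.ReflTransGen.head (step_symm step_6) eqv_8

lemma eqv_2 : InvEquiv (Pb ![false,true,false,false,true,true]) (Pb ![false,false,true,true,false,true]) :=
  Relation.ReflTransGen.head (step_symm step_2) eqv_6

lemma eqv_9 : InvEquiv (Pb ![true,false,true,true,false,false]) (Pb ![false,false,true,true,false,true]) :=
  Relation.ReflTransGen.head (step_symm step_9) eqv_8

lemma eqv_10 : InvEquiv (Pb ![true,true,false,false,false,true]) (Pb ![false,false,true,true,false,true]) :=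
  Relation.ReflTransGen.head (step_symm step_10) eqv_8

lemma eqv_11 : InvEquiv (Pb ![true,true,false,false,true,false]) (Pb ![false,false,true,true,false,true]) :=
  Relation.ReflTransGen.head (step_symm step_11) eqv_6

lemma toBase : ∀ b ∈ L, InvEquiv (Pb b) (Pb ![false,false,true,true,false,true]) := by
  intro b hb
  fin_cases hb
  exacts [eqv_0, eqv_1, eqv_2, eqv_3, eqv_4, eqv_5, eqv_6, eqv_7, eqv_8, eqv_9, eqv_10, eqv_11]

set_option maxRecDepth 10000 in
lemma Gb_inj_aux : ∀ b b' : Fin 6 → Bool, (∀ u v, GbAdj b u v ↔ GbAdj b' u v) → b = b' := by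
  decide

lemma Pb_inj : Function.Injective Pb := by
  intro b b' h
  have hg : Gb b = Gb b' := congrFun h 0
  exact Gb_inj_aux b b' (fun u v => iff_of_eq (congrArg (fun G => G.Adj u v) hg))


/-- For `d = 2`: any two cycle-free `2`-partitions of `K_4` are involution equivalent, and
there are exactly `12` cycle-free `2`-partitions of `K_4`. -/
theorem d_two_case :
    (∀ P Q : Fin 2 → SimpleGraph (Fin 4), IsCFP P → IsCFP Q → InvEquiv P Q) ∧
    {P : Fin 2 → SimpleGraph (Fin 4) | IsCFP P}.ncard = 12 := by
  constructor
  · intro P Q hP hQ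
    obtain ⟨bP, rfl⟩ := repr_lemma hP
    obtain ⟨bQ, rfl⟩ := repr_lemma hQ
    have hbP : bP ∈ L := (acyclic_iff_memL bP).1 ((cfp_Pb_iff bP).1 hP)
    have hbQ : bQ ∈ L := (acyclic_iff_memL bQ).1 ((cfp_Pb_iff bQ).1 hQ)
    exact (toBase bP hbP).trans (invEquiv_symm (toBase bQ hbQ))
  · have hset : {P : Fin 2 → SimpleGraph (Fin 4) | IsCFP P} = Pb '' {b | b ∈ L} := by
      ext P
      constructor
      · intro hP
        obtain ⟨b, rfl⟩ := repr_lemma hP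
        exact ⟨b, (acyclic_iff_memL b).1 ((cfp_Pb_iff b).1 hP), rfl⟩
      · rintro ⟨b, hb, rfl⟩
        exact cfp_of_mem hb
    rw [hset, Set.ncard_image_of_injective _ Pb_inj]
    have h2 : {b : Fin 6 → Bool | b ∈ L} = ↑L.toFinset := by ext; simp
    rw [h2, Set.ncard_coe_finset]
    decide
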